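/- Let K be an algebraically closed field of characteristic zero and let q ∈ K be nonzero. Let R = K[h,s]/( 2h⁸ − 6h⁴s + 3s² , −11h¹² + 26h⁸s + 3hq ). Then: (i) the images of h and s generate a maximal ideal 𝔪₀ of R; (ii) the localization R_{𝔪₀} is isomorphic as a K-algebra to K[x]/(x²), the Jacobian ring of the simple hypersurface singularity of type A₂ given by f = x³; in particular R is not reduced; (iii) for every maximal ideal 𝔪 of R other than 𝔪₀, the localization R_𝔪 is isomorphic to K, so 𝔪₀ is the unique non-reduced point. -/

import Mathlib

open MvPolynomial

/-- The ideal of relations of the small quantum cohomology of the coadjoint variety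
`F₄/P₄`, in the variables `h = X 0`, `s = X 1`. -/
noncomputable def relF4 (K : Type) [Field K] (q : K) : Ideal (MvPolynomial (Fin 2) K) :=
  Ideal.span
    { 2 * X 0 ^ 8 - 6 * X 0 ^ 4 * X 1 + 3 * X 1 ^ 2,
      -11 * X 0 ^ 12 + 26 * X 0 ^ 8 * X 1 + 3 * C q * X 0 }

/-- The ideal of `QH(F₄/P₄)` generated by the images of `h`, `s`. -/
noncomputable def mF4 (K : Type) [Field K] (q : K) :
    Ideal (MvPolynomial (Fin 2) K ⧸ relF4 K q) :=
  Ideal.span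
    { Ideal.Quotient.mk (relF4 K q) (X 0),
      Ideal.Quotient.mk (relF4 K q) (X 1) }


namespace F4aux
variable {K : Type} [Field K]

/-! ### Certificates in the relation ideal -/

noncomputable def Wp (q : K) : MvPolynomial (Fin 2) K :=
  X 0 ^ 22 - 270 * C q * X 0 ^ 11 - 27 * C q ^ 2

lemma memA (q : K) : X 0 * Wp q ∈ relF4 K q := by
  refine Ideal.mem_span_pair.mpr ⟨-676 * X 0 ^ 15,
    -123 * X 0 ^ 11 + 78 * X 0 ^ 7 * X 1 - 9 * C q, ?_⟩
  unfold Wp; ring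

lemma memB [CharZero K] (q : K) : X 1 ^ 2 * Wp q ∈ relF4 K q := by
  have h3 : (3 : K) ≠ 0 := by norm_num
  have mem3 : (3 : MvPolynomial (Fin 2) K) * (X 1 ^ 2 * Wp q) ∈ relF4 K q := by
    refine Ideal.mem_span_pair.mpr
      ⟨Wp q + (6 * X 0 ^ 3 * X 1 - 2 * X 0 ^ 7) * (-676 * X 0 ^ 15),
       (6 * X 0 ^ 3 * X 1 - 2 * X 0 ^ 7) *
         (-123 * X 0 ^ 11 + 78 * X 0 ^ 7 * X 1 - 9 * C q), ?_⟩
    unfold Wp; ring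
  have heq : (X 1 ^ 2 * Wp q) = C (3:K)⁻¹ * (3 * (X 1 ^ 2 * Wp q)) := by
    rw [← mul_assoc]
    have h1 : (C (3:K)⁻¹ : MvPolynomial (Fin 2) K) * 3 = 1 := by
      rw [← map_ofNat (C : K →+* MvPolynomial (Fin 2) K) 3, ← map_mul,
        inv_mul_cancel₀ h3, map_one]
    rw [h1, one_mul]
  rw [heq]
  exact Ideal.mul_mem_left _ _ mem3

/-! ### Polynomials vanishing at a point -/

lemma span_X_eq :
    Ideal.span ({X 0, X 1} : Set (MvPolynomial (Fin 2) K)) =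
      Ideal.span (X '' (Set.univ : Set (Fin 2))) := by
  congr 1
  ext y
  constructor
  · rintro (rfl | rfl)
    exacts [⟨0, trivial, rfl⟩, ⟨1, trivial, rfl⟩]
  · rintro ⟨i, -, rfl⟩
    fin_cases i
    · exact Or.inl rfl
    · exact Or.inr rfl

lemma eval_zero_ringHom_eq :
    (eval (fun _ => (0:K)) : MvPolynomial (Fin 2) K →+* K) = constantCoeff := by
  apply MvPolynomial.ringHom_ext <;> simp

lemma mem_span_X_of_eval_zero {r : MvPolynomial (Fin 2) K}
    (h : eval (fun _ => (0:K)) r = 0) :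
    r ∈ Ideal.span ({X 0, X 1} : Set (MvPolynomial (Fin 2) K)) := by
  rw [span_X_eq]
  rw [mem_ideal_span_X_image]
  intro m hm
  have hm0 : m ≠ 0 := by
    rintro rfl
    have h4 : constantCoeff r ≠ 0 := by
      simpa [constantCoeff_eq] using (mem_support_iff.mp hm)
    rw [← eval_zero_ringHom_eq] at h4
    exact h4 h
  obtain ⟨i, hi⟩ := Finsupp.ne_iff.mp hm0
  exact ⟨i, trivial, hi⟩

lemma sub_eval_mem_span (p : Fin 2 → K) (r : MvPolynomial (Fin 2) K) :
    r - C (eval p r) ∈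
      Ideal.span ({X 0 - C (p 0), X 1 - C (p 1)} : Set (MvPolynomial (Fin 2) K)) := by
  set τp : MvPolynomial (Fin 2) K →ₐ[K] MvPolynomial (Fin 2) K :=
    aeval (fun i => X i + C (p i)) with hτp
  set τm : MvPolynomial (Fin 2) K →ₐ[K] MvPolynomial (Fin 2) K :=
    aeval (fun i => X i - C (p i)) with hτm
  have hcomp : ∀ g, τm (τp g) = g := by
    intro g
    have h5 : τm.comp τp = AlgHom.id K _ := by
      apply MvPolynomial.algHom_ext
      intro i
      simp [hτp, hτm, algebraMap_eq]
    calc τm (τp g) = (τm.comp τp) g := rfl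
      _ = g := by rw [h5]; rfl
  have heval : eval (fun _ => (0:K)) (τp r) = eval p r := by
    have h6 : ((eval (fun _ => (0:K)) : MvPolynomial (Fin 2) K →+* K)).comp
        (τp.toRingHom) = (eval p : MvPolynomial (Fin 2) K →+* K) := by
      apply MvPolynomial.ringHom_ext
      · intro c; simp [hτp, algebraMap_eq]
      · intro i; simp [hτp, algebraMap_eq]
    exact congrFun (congrArg DFunLike.coe h6) r
  have hg : τp r - C (eval p r) ∈
      Ideal.span ({X 0, X 1} : Set (MvPolynomial (Fin 2) K)) := by
    apply mem_span_X_of_eval_zero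
    have h2 : constantCoeff (τp r) = eval p r := by
      have h3 := congrFun (congrArg DFunLike.coe (eval_zero_ringHom_eq (K:=K))) (τp r)
      rw [← h3]; exact heval
    simp [h2]
  obtain ⟨c₁, c₂, hc⟩ := Ideal.mem_span_pair.mp hg
  refine Ideal.mem_span_pair.mpr ⟨τm c₁, τm c₂, ?_⟩
  have h7 := congrArg τm hc
  rw [map_add, map_mul, map_mul, map_sub, hcomp] at h7
  simpa [hτm, algebraMap_eq] using h7

/-! ### Maximality of `mF4` -/

lemma span_X_maximal [IsAlgClosed K] :
    (Ideal.span ({X 0, X 1} : Set (MvPolynomial (Fin 2) K))).IsMaximal := by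
  have he : Ideal.span ({X 0, X 1} : Set (MvPolynomial (Fin 2) K)) =
      vanishingIdeal K {(fun _ => 0 : Fin 2 → K)} := by
    apply le_antisymm
    · rw [Ideal.span_le]
      rintro y (rfl | rfl) <;>
        · rw [SetLike.mem_coe, mem_vanishingIdeal_singleton_iff]; simp
    · intro g hg
      exact mem_span_X_of_eval_zero ((mem_vanishingIdeal_singleton_iff _ _).mp hg)
  rw [he]
  infer_instance

lemma rel_le_span_X (q : K) :
    relF4 K q ≤ Ideal.span ({X 0, X 1} : Set (MvPolynomial (Fin 2) K)) := by
  rw [relF4, Ideal.span_le]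
  rintro y (rfl | rfl)
  · exact Ideal.mem_span_pair.mpr ⟨2 * X 0 ^ 7 - 6 * X 0 ^ 3 * X 1, 3 * X 1, by ring⟩
  · exact Ideal.mem_span_pair.mpr ⟨-11 * X 0 ^ 11 + 3 * C q, 26 * X 0 ^ 8, by ring⟩

lemma mF4_eq_map (q : K) :
    mF4 K q = Ideal.map (Ideal.Quotient.mk (relF4 K q))
      (Ideal.span ({X 0, X 1} : Set (MvPolynomial (Fin 2) K))) := by
  rw [mF4, Ideal.map_span, Set.image_insert_eq, Set.image_singleton]

lemma mF4_isMaximal [IsAlgClosed K] (q : K) : (mF4 K q).IsMaximal := by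
  rw [mF4_eq_map q]
  haveI := span_X_maximal (K := K)
  rcases Ideal.map_eq_top_or_isMaximal_of_surjective (Ideal.Quotient.mk (relF4 K q))
      Ideal.Quotient.mk_surjective (span_X_maximal (K := K)) with htop | hmax
  · exfalso
    have hc := Ideal.comap_map_of_surjective (Ideal.Quotient.mk (relF4 K q))
      Ideal.Quotient.mk_surjective (Ideal.span ({X 0, X 1} : Set (MvPolynomial (Fin 2) K)))
    rw [htop, Ideal.comap_top] at hc
    have hsup : Ideal.span ({X 0, X 1} : Set (MvPolynomial (Fin 2) K)) ⊔
        Ideal.comap (Ideal.Quotient.mk (relF4 K q)) ⊥ =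
        Ideal.span ({X 0, X 1} : Set (MvPolynomial (Fin 2) K)) := by
      apply sup_eq_left.mpr
      rw [← RingHom.ker_eq_comap_bot, Ideal.mk_ker]
      exact rel_le_span_X q
    have h8 : Ideal.span ({X 0, X 1} : Set (MvPolynomial (Fin 2) K)) = ⊤ := by
      rw [← hsup, ← hc]
    exact (span_X_maximal (K := K)).ne_top h8
  · exact hmax

/-! ### The ring `K[x]/(x²)` -/

abbrev TT (K : Type) [Field K] : Type :=
  Polynomial K ⧸ Ideal.span {(Polynomial.X : Polynomial K) ^ 2}

noncomputable def xb : TT K := Ideal.Quotient.mk _ Polynomial.X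

lemma xb_sq : (xb : TT K) ^ 2 = 0 := by
  rw [xb, ← map_pow]
  exact Ideal.Quotient.eq_zero_iff_mem.mpr (Ideal.subset_span rfl)

noncomputable def αh : MvPolynomial (Fin 2) K →ₐ[K] TT K :=
  aeval ![0, xb]

@[simp] lemma αh_X0 : (αh : MvPolynomial (Fin 2) K →ₐ[K] TT K) (X 0) = 0 := by
  simp [αh]

@[simp] lemma αh_X1 : (αh : MvPolynomial (Fin 2) K →ₐ[K] TT K) (X 1) = xb := by
  simp [αh]

lemma αh_C (c : K) : (αh : MvPolynomial (Fin 2) K →ₐ[K] TT K) (C c) = algebraMap K (TT K) c := by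
  simp [αh]

lemma αh_rel (q : K) : ∀ a ∈ relF4 K q, (αh : MvPolynomial (Fin 2) K →ₐ[K] TT K) a = 0 := by
  have hle : relF4 K q ≤
      RingHom.ker ((αh : MvPolynomial (Fin 2) K →ₐ[K] TT K) : MvPolynomial (Fin 2) K →+* TT K) := by
    rw [relF4, Ideal.span_le]
    rintro y (rfl | rfl) <;>
    · rw [SetLike.mem_coe, RingHom.mem_ker]
      show (αh : MvPolynomial (Fin 2) K →ₐ[K] TT K) _ = 0
      simp only [map_add, map_sub, map_mul, map_pow, map_neg, map_ofNat, αh_X0, αh_X1, αh_C]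
      try rw [xb_sq]
      ring
  exact fun a ha => hle ha

noncomputable def Φ (q : K) : (MvPolynomial (Fin 2) K ⧸ relF4 K q) →ₐ[K] TT K :=
  Ideal.Quotient.liftₐ (relF4 K q) αh (αh_rel q)

lemma Φ_mk (q : K) (a : MvPolynomial (Fin 2) K) :
    Φ q (Ideal.Quotient.mk (relF4 K q) a) = αh a := by
  rfl

noncomputable def π : TT K →+* K :=
  Ideal.Quotient.lift _ (Polynomial.evalRingHom 0) (by
    intro a ha
    rw [Ideal.mem_span_singleton] at ha
    obtain ⟨g, rfl⟩ := ha
    simp)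

@[simp] lemma π_mk (P : Polynomial K) : (π : TT K →+* K) (Ideal.Quotient.mk _ P) = P.eval 0 := by
  rw [π, Ideal.Quotient.lift_mk]
  rfl

@[simp] lemma π_xb : (π : TT K →+* K) xb = 0 := by
  rw [xb, π_mk]; simp

lemma π_algebraMap (c : K) : (π : TT K →+* K) (algebraMap K (TT K) c) = c := by
  rw [IsScalarTower.algebraMap_apply K (Polynomial K) (TT K),
    Ideal.Quotient.algebraMap_eq, π_mk, Polynomial.algebraMap_eq]
  simp

lemma TT_isUnit {t : TT K} (h : (π : TT K →+* K) t ≠ 0) : IsUnit t := by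
  obtain ⟨P, rfl⟩ := Ideal.Quotient.mk_surjective t
  rw [π_mk] at h
  set c := P.eval 0 with hc
  have hdvd : Polynomial.X ∣ (P - Polynomial.C c) := by
    rw [Polynomial.X_dvd_iff]
    simp [hc, Polynomial.coeff_zero_eq_eval_zero]
  obtain ⟨g, hg⟩ := hdvd
  have hP : P = Polynomial.C c + Polynomial.X * g := by linear_combination hg
  set n : TT K := Ideal.Quotient.mk _ (Polynomial.X * g) with hn
  have hn2 : n ^ 2 = 0 := by
    rw [hn, ← map_pow, Ideal.Quotient.eq_zero_iff_mem, Ideal.mem_span_singleton]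
    exact ⟨g ^ 2, by ring⟩
  refine IsUnit.of_mul_eq_one
    ((Ideal.Quotient.mk _ (Polynomial.C c) - n) * Ideal.Quotient.mk _ (Polynomial.C (c*c)⁻¹)) ?_
  have expand : (Ideal.Quotient.mk (Ideal.span {(Polynomial.X : Polynomial K) ^ 2}) P) *
      ((Ideal.Quotient.mk _ (Polynomial.C c) - n) * Ideal.Quotient.mk _ (Polynomial.C (c*c)⁻¹)) =
      ((Ideal.Quotient.mk _ (Polynomial.C c))^2 - n^2) *
        Ideal.Quotient.mk _ (Polynomial.C (c*c)⁻¹) := by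
    rw [hP, hn]
    push_cast [map_add, map_mul]
    ring
  rw [expand, hn2, sub_zero, ← map_pow, ← map_mul, ← Polynomial.C_pow, ← Polynomial.C_mul]
  rw [show (c^2 * (c*c)⁻¹) = 1 by field_simp]
  simp

variable [IsAlgClosed K]

lemma ker_piPhi (q : K) :
    mF4 K q = RingHom.ker ((π : TT K →+* K).comp
      ((Φ q : (MvPolynomial (Fin 2) K ⧸ relF4 K q) →ₐ[K] TT K) :
        (MvPolynomial (Fin 2) K ⧸ relF4 K q) →+* TT K)) := by
  have hle : mF4 K q ≤ RingHom.ker ((π : TT K →+* K).comp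
      ((Φ q : (MvPolynomial (Fin 2) K ⧸ relF4 K q) →ₐ[K] TT K) :
        (MvPolynomial (Fin 2) K ⧸ relF4 K q) →+* TT K)) := by
    rw [mF4, Ideal.span_le]
    rintro y (rfl | rfl) <;>
    · rw [SetLike.mem_coe, RingHom.mem_ker, RingHom.comp_apply]
      show (π : TT K →+* K) (Φ q _) = 0
      rw [Φ_mk]
      simp
  exact ((mF4_isMaximal q).eq_of_le (RingHom.ker_ne_top _) hle)

lemma not_mem_mF4_of_pi_ne {q : K} {r : MvPolynomial (Fin 2) K ⧸ relF4 K q}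
    (h : (π : TT K →+* K) (Φ q r) ≠ 0) : r ∉ mF4 K q := by
  intro hmem
  rw [ker_piPhi q] at hmem
  exact h hmem

lemma ker_alpha {r : MvPolynomial (Fin 2) K}
    (h : (αh : MvPolynomial (Fin 2) K →ₐ[K] TT K) r = 0) :
    r ∈ Ideal.span ({X 0, X 1 ^ 2} : Set (MvPolynomial (Fin 2) K)) := by
  set J := Ideal.span ({X 0, X 1 ^ 2} : Set (MvPolynomial (Fin 2) K)) with hJ
  set κ := Ideal.Quotient.mk J with hκ
  have hX1sq : (κ (X 1)) ^ 2 = 0 := by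
    rw [← map_pow, hκ, Ideal.Quotient.eq_zero_iff_mem, hJ]
    exact Ideal.subset_span (Or.inr rfl)
  set γ : TT K →ₐ[K] (MvPolynomial (Fin 2) K ⧸ J) :=
    Ideal.Quotient.liftₐ _ (Polynomial.aeval (κ (X 1))) (by
      intro a ha
      rw [Ideal.mem_span_singleton] at ha
      obtain ⟨g, rfl⟩ := ha
      rw [map_mul, map_pow, Polynomial.aeval_X, hX1sq, zero_mul]) with hγ
  have hγxb : γ xb = κ (X 1) := by
    rw [hγ, xb]
    exact Polynomial.aeval_X _
  have hcomp : (γ.comp (αh : MvPolynomial (Fin 2) K →ₐ[K] TT K)) =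
      Ideal.Quotient.mkₐ K J := by
    apply MvPolynomial.algHom_ext
    intro i
    fin_cases i
    · show γ ((αh : MvPolynomial (Fin 2) K →ₐ[K] TT K) (X 0)) = Ideal.Quotient.mkₐ K J (X 0)
      rw [αh_X0, map_zero]
      symm
      show κ (X 0) = 0
      rw [hκ, Ideal.Quotient.eq_zero_iff_mem, hJ]
      exact Ideal.subset_span (Or.inl rfl)
    · show γ ((αh : MvPolynomial (Fin 2) K →ₐ[K] TT K) (X 1)) = Ideal.Quotient.mkₐ K J (X 1)
      rw [αh_X1, hγxb]
      rfl
  have : κ r = 0 := by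
    have h2 : γ ((αh : MvPolynomial (Fin 2) K →ₐ[K] TT K) r) = κ r := by
      have := congrFun (congrArg DFunLike.coe hcomp) r
      exact this
    rw [h, map_zero] at h2
    exact h2.symm
  rwa [hκ, Ideal.Quotient.eq_zero_iff_mem] at this

lemma mk_C_eq (c : K) : Ideal.Quotient.mk (Ideal.span {(Polynomial.X : Polynomial K) ^ 2})
    (Polynomial.C c) = algebraMap K (TT K) c := by
  rw [IsScalarTower.algebraMap_apply K (Polynomial K) (TT K),
    Ideal.Quotient.algebraMap_eq, Polynomial.algebraMap_eq]

lemma alpha_Wp [CharZero K] (q : K) :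
    (αh : MvPolynomial (Fin 2) K →ₐ[K] TT K) (Wp q) = algebraMap K (TT K) (-27 * q ^ 2) := by
  have h1 : (αh : MvPolynomial (Fin 2) K →ₐ[K] TT K) (Wp q) =
      0 ^ 22 - 270 * algebraMap K (TT K) q * 0 ^ 11 - 27 * (algebraMap K (TT K) q) ^ 2 := by
    rw [Wp]
    simp only [map_sub, map_mul, map_pow, map_ofNat, αh_X0, αh_C]
  rw [h1, map_mul, map_pow, map_neg, map_ofNat]
  ring

set_option maxHeartbeats 1000000 in
set_option synthInstance.maxHeartbeats 400000 in
lemma locEquiv [CharZero K] (q : K) (hq : q ≠ 0) [hp : (mF4 K q).IsPrime] :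
    Nonempty ((Localization.AtPrime (mF4 K q)) ≃ₐ[K] TT K) := by
  set R := MvPolynomial (Fin 2) K ⧸ relF4 K q with hR
  set Loc := Localization.AtPrime (mF4 K q) with hLoc
  have hunits : ∀ u : (mF4 K q).primeCompl,
      IsUnit (((Φ q : R →ₐ[K] TT K) : R →+* TT K) u) := by
    intro u
    apply TT_isUnit
    intro h0
    have h1 : (u : R) ∈ RingHom.ker ((π : TT K →+* K).comp
        ((Φ q : R →ₐ[K] TT K) : R →+* TT K)) := RingHom.mem_ker.mpr h0
    rw [← ker_piPhi q] at h1
    exact u.2 h1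
  set ψ : Loc →+* TT K := IsLocalization.lift (S := Loc) hunits with hψ
  have hψ_alg : ∀ r : R, ψ (algebraMap R Loc r) = Φ q r := fun r =>
    IsLocalization.lift_eq hunits r
  have hcommutes : ∀ c : K, ψ (algebraMap K Loc c) = algebraMap K (TT K) c := by
    intro c
    rw [IsScalarTower.algebraMap_apply K R Loc, hψ_alg]
    have h2 : algebraMap K R c = Ideal.Quotient.mk (relF4 K q) (C c) := by
      rw [IsScalarTower.algebraMap_apply K (MvPolynomial (Fin 2) K) R,
        Ideal.Quotient.algebraMap_eq, algebraMap_eq]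
    rw [h2, Φ_mk, αh_C]
  set Ψ : Loc →ₐ[K] TT K := { toRingHom := ψ, commutes' := hcommutes } with hΨ
  have hΨ_apply : ∀ z : Loc, Ψ z = ψ z := fun _ => rfl
  have hsurj : Function.Surjective Ψ := by
    intro t
    obtain ⟨P, rfl⟩ := Ideal.Quotient.mk_surjective t
    refine ⟨algebraMap R Loc (Ideal.Quotient.mk (relF4 K q)
      (C (P.coeff 0) + C (P.divX.coeff 0) * X 1)), ?_⟩
    rw [hΨ_apply, hψ_alg, Φ_mk, map_add, map_mul, αh_X1, αh_C, αh_C]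
    have h1 : Polynomial.X * P.divX + Polynomial.C (P.coeff 0) = P :=
      Polynomial.X_mul_divX_add P
    have h2 : Polynomial.X * P.divX.divX + Polynomial.C (P.divX.coeff 0) = P.divX :=
      Polynomial.X_mul_divX_add P.divX
    have hP : P = Polynomial.C (P.coeff 0) + Polynomial.C (P.divX.coeff 0) * Polynomial.X
        + Polynomial.X ^ 2 * P.divX.divX := by
      linear_combination -h1 - Polynomial.X * h2
    have h3 := congrArg (Ideal.Quotient.mk (Ideal.span {(Polynomial.X : Polynomial K) ^ 2})) hP
    rw [map_add, map_add, map_mul, map_mul, map_pow, mk_C_eq, mk_C_eq] at h3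
    rw [show Ideal.Quotient.mk (Ideal.span {(Polynomial.X : Polynomial K) ^ 2}) Polynomial.X
      = (xb : TT K) from rfl, xb_sq, zero_mul, add_zero] at h3
    exact h3.symm
  have hinj : Function.Injective Ψ := by
    rw [injective_iff_map_eq_zero]
    intro z hz
    obtain ⟨⟨r, u⟩, rfl⟩ := IsLocalization.mk'_surjective (mF4 K q).primeCompl z
    have hspec := IsLocalization.mk'_spec Loc r u
    have hspec2 := congrArg ψ hspec
    rw [map_mul, ← hΨ_apply, hz, zero_mul, hψ_alg] at hspec2
    obtain ⟨r', rfl⟩ := Ideal.Quotient.mk_surjective r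
    rw [Φ_mk] at hspec2
    obtain ⟨c₁, c₂, hc⟩ := Ideal.mem_span_pair.mp (ker_alpha hspec2.symm)
    have hrel : Wp q * r' ∈ relF4 K q := by
      have heq : Wp q * r' = c₁ * (X 0 * Wp q) + c₂ * (X 1 ^ 2 * Wp q) := by
        rw [← hc]; ring
      rw [heq]
      exact Ideal.add_mem _ (Ideal.mul_mem_left _ _ (memA q)) (Ideal.mul_mem_left _ _ (memB q))
    have hW : Ideal.Quotient.mk (relF4 K q) (Wp q) ∉ mF4 K q := by
      apply not_mem_mF4_of_pi_ne
      rw [Φ_mk, alpha_Wp q, π_algebraMap]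
      intro h0
      rcases mul_eq_zero.mp h0 with h0 | h0
      · norm_num at h0
      · exact hq (pow_eq_zero_iff (by norm_num) |>.mp h0)
    have hzero : algebraMap R Loc (Ideal.Quotient.mk (relF4 K q) r') = 0 :=
      (IsLocalization.map_eq_zero_iff (mF4 K q).primeCompl Loc _).mpr
        ⟨⟨Ideal.Quotient.mk (relF4 K q) (Wp q), hW⟩, by
          show Ideal.Quotient.mk (relF4 K q) (Wp q) * Ideal.Quotient.mk (relF4 K q) r' = 0
          rw [← map_mul]
          exact Ideal.Quotient.eq_zero_iff_mem.mpr hrel⟩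
    have hu := IsLocalization.map_units Loc u
    rw [hzero] at hspec
    exact (IsUnit.mul_left_eq_zero hu).mp hspec
  exact ⟨AlgEquiv.ofBijective Ψ ⟨hinj, hsurj⟩⟩

lemma span_eq_deriv [CharZero K] :
    Ideal.span {(Polynomial.X : Polynomial K) ^ 2} =
      Ideal.span {Polynomial.derivative ((Polynomial.X : Polynomial K) ^ 3)} := by
  have hd : Polynomial.derivative ((Polynomial.X : Polynomial K) ^ 3) =
      Polynomial.C 3 * Polynomial.X ^ 2 := by
    rw [Polynomial.derivative_X_pow]
    norm_num
  rw [hd]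
  rw [Ideal.span_singleton_eq_span_singleton]
  have hu : IsUnit (Polynomial.C (3:K)) :=
    Polynomial.isUnit_C.mpr (isUnit_iff_ne_zero.mpr (by norm_num))
  exact ⟨hu.unit, by rw [IsUnit.unit_spec]; ring⟩

lemma not_reduced [CharZero K] (q : K) (hq : q ≠ 0) :
    ¬ IsReduced (MvPolynomial (Fin 2) K ⧸ relF4 K q) := by
  intro hred
  set n := Ideal.Quotient.mk (relF4 K q) (X 1 * Wp q) with hn
  have hn2 : n ^ 2 = 0 := by
    rw [hn, ← map_pow, Ideal.Quotient.eq_zero_iff_mem]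
    have heq : (X 1 * Wp q) ^ 2 = (X 1 ^ 2 * Wp q) * Wp q := by ring
    rw [heq]
    exact Ideal.mul_mem_right _ _ (memB q)
  have hn0 : n = 0 := IsNilpotent.eq_zero ⟨2, hn2⟩
  have hΦ : Φ q n = Ideal.Quotient.mk (Ideal.span {(Polynomial.X : Polynomial K) ^ 2})
      (Polynomial.X * Polynomial.C (-27 * q ^ 2)) := by
    rw [hn, Φ_mk, map_mul, αh_X1, alpha_Wp q, ← mk_C_eq, xb, ← map_mul]
  rw [hn0, map_zero] at hΦ
  have hmem : (Polynomial.X * Polynomial.C (-27 * q ^ 2) : Polynomial K) ∈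
      Ideal.span {(Polynomial.X : Polynomial K) ^ 2} :=
    Ideal.Quotient.eq_zero_iff_mem.mp hΦ.symm
  rw [Ideal.mem_span_singleton] at hmem
  have hcne : (-27 * q ^ 2 : K) ≠ 0 := mul_ne_zero (by norm_num) (pow_ne_zero 2 hq)
  have hne0 : (Polynomial.X * Polynomial.C (-27 * q ^ 2) : Polynomial K) ≠ 0 :=
    mul_ne_zero Polynomial.X_ne_zero (Polynomial.C_ne_zero.mpr hcne)
  have hdeg := Polynomial.natDegree_le_of_dvd hmem hne0
  rw [Polynomial.natDegree_X_pow, mul_comm, Polynomial.natDegree_C_mul_X _ hcne] at hdeg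
  omega

set_option maxHeartbeats 1600000 in
set_option synthInstance.maxHeartbeats 400000 in
lemma other_max [CharZero K] (q : K) (hq : q ≠ 0)
    (𝔪 : Ideal (MvPolynomial (Fin 2) K ⧸ relF4 K q)) (hm : 𝔪.IsMaximal)
    (hne : 𝔪 ≠ mF4 K q) [hp : 𝔪.IsPrime] :
    Nonempty ((Localization.AtPrime 𝔪) ≃ₐ[K] K) := by
  set R := MvPolynomial (Fin 2) K ⧸ relF4 K q with hRdef
  set mkq := Ideal.Quotient.mk (relF4 K q) with hmkq
  set M := Ideal.comap mkq 𝔪 with hM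
  haveI hMmax : M.IsMaximal :=
    Ideal.comap_isMaximal_of_surjective mkq Ideal.Quotient.mk_surjective
  obtain ⟨p, hp_eq⟩ := (MvPolynomial.isMaximal_iff_eq_vanishingIdeal_singleton (I := M)).mp hMmax
  have hmem𝔪 : ∀ g : MvPolynomial (Fin 2) K, mkq g ∈ 𝔪 ↔ eval p g = 0 := by
    intro g
    rw [show (mkq g ∈ 𝔪) ↔ g ∈ M from Iff.rfl, hp_eq,
      mem_vanishingIdeal_singleton_iff]
    exact Iff.rfl
  have hrelM : ∀ g ∈ relF4 K q, eval p g = 0 := by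
    intro g hg
    exact (hmem𝔪 g).mp (by rw [hmkq, Ideal.Quotient.eq_zero_iff_mem.mpr hg]; exact 𝔪.zero_mem)
  set a := p 0 with hadef
  set b := p 1 with hbdef
  have e₁ : 2 * a ^ 8 - 6 * a ^ 4 * b + 3 * b ^ 2 = 0 := by
    have := hrelM _ (Ideal.subset_span (Or.inl rfl))
    simpa [map_ofNat] using this
  have e₂ : -11 * a ^ 12 + 26 * a ^ 8 * b + 3 * q * a = 0 := by
    have := hrelM _ (Ideal.subset_span (Or.inr rfl))
    simpa [map_ofNat] using this
  by_cases ha : a = 0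
  · exfalso
    apply hne
    have hb : b = 0 := by
      have h4 : b ^ 2 = 0 := by
        rw [ha] at e₁
        linear_combination (1/3 : K) * e₁
      exact pow_eq_zero_iff (by norm_num) |>.mp h4
    have hle : mF4 K q ≤ 𝔪 := by
      rw [mF4, Ideal.span_le]
      rintro y (rfl | rfl)
      · exact (hmem𝔪 _).mpr (by rw [eval_X]; exact ha)
      · exact (hmem𝔪 _).mpr (by rw [eval_X]; exact hb)
    exact ((mF4_isMaximal q).eq_of_le hm.ne_top hle).symm
  · have Wa : a ^ 22 - 270 * q * a ^ 11 - 27 * q ^ 2 = 0 := by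
      have h2 : a ^ 2 * (a ^ 22 - 270 * q * a ^ 11 - 27 * q ^ 2) = 0 := by
        linear_combination (-676 * a ^ 16) * e₁ +
          (3 * (-11 * a ^ 12 + 26 * a ^ 8 * b + 3 * q * a) + 6 * (11 * a ^ 12 - 3 * q * a)
            - 156 * a ^ 12) * e₂
      rcases mul_eq_zero.mp h2 with h | h
      · exact absurd (pow_eq_zero_iff (by norm_num) |>.mp h) ha
      · exact h
    set P : Polynomial K := Polynomial.X ^ 22 - Polynomial.C (270 * q) * Polynomial.X ^ 11
      - Polynomial.C (27 * q ^ 2) with hPdef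
    have hroot : P.IsRoot a := by
      rw [Polynomial.IsRoot, hPdef]
      simp only [Polynomial.eval_sub, Polynomial.eval_mul, Polynomial.eval_pow,
        Polynomial.eval_X, Polynomial.eval_C]
      linear_combination Wa
    set P₁ := P / (Polynomial.X - Polynomial.C a) with hP₁
    have hfact : (Polynomial.X - Polynomial.C a) * P₁ = P :=
      Polynomial.mul_div_eq_iff_isRoot.mpr hroot
    have hderiv : Polynomial.derivative P =
        Polynomial.C (22 : K) * Polynomial.X ^ 21 - Polynomial.C (2970 * q) * Polynomial.X ^ 10 := by
      rw [hPdef]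
      simp only [Polynomial.derivative_sub, Polynomial.derivative_mul,
        Polynomial.derivative_X_pow, Polynomial.derivative_C, zero_mul, zero_add, map_mul]
      push_cast
      simp only [map_ofNat]
      ring
    have hP₁a : P₁.eval a = 22 * a ^ 21 - 2970 * q * a ^ 10 := by
      have h5 := congrArg Polynomial.derivative hfact
      rw [Polynomial.derivative_mul, Polynomial.derivative_sub, Polynomial.derivative_X,
        Polynomial.derivative_C, sub_zero, one_mul] at h5
      have h6 := congrArg (Polynomial.eval a) h5
      rw [Polynomial.eval_add, Polynomial.eval_mul, Polynomial.eval_sub, Polynomial.eval_X,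
        Polynomial.eval_C, sub_self, zero_mul, add_zero, hderiv] at h6
      simpa using h6
    have hP₁a_ne : P₁.eval a ≠ 0 := by
      rw [hP₁a]
      intro h0
      have h7 : a ^ 11 = 135 * q := by
        have h8 : a ^ 10 * (22 * a ^ 11 - 2970 * q) = 0 := by linear_combination h0
        rcases mul_eq_zero.mp h8 with h | h
        · exact absurd (pow_eq_zero_iff (by norm_num) |>.mp h) ha
        · linear_combination (1/22 : K) * h
      have h9 : (18252 : K) * q ^ 2 = 0 := by
        linear_combination -Wa + (a ^ 11 - 135 * q) * h7
      rcases mul_eq_zero.mp h9 with h | h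
      · norm_num at h
      · exact hq (pow_eq_zero_iff (by norm_num) |>.mp h)
    set U : MvPolynomial (Fin 2) K :=
      X 0 ^ 2 * Polynomial.aeval (X 0 : MvPolynomial (Fin 2) K) P₁ with hU
    have haevalP : Polynomial.aeval (X 0 : MvPolynomial (Fin 2) K) P = Wp q := by
      rw [hPdef, Wp]
      simp only [map_sub, map_mul, map_pow, Polynomial.aeval_X, Polynomial.aeval_C,
        algebraMap_eq, map_ofNat]
    have hkeyU : (X 0 - C a) * U ∈ relF4 K q := by
      have h11 : (X 0 - C a) * U = X 0 * (X 0 * Wp q) := by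
        rw [hU, ← haevalP, ← hfact]
        simp only [map_mul, map_sub, Polynomial.aeval_X, Polynomial.aeval_C, algebraMap_eq]
        ring
      rw [h11]
      exact Ideal.mul_mem_left _ _ (memA q)
    have hevalaeval : ∀ Q : Polynomial K,
        eval p (Polynomial.aeval (X 0 : MvPolynomial (Fin 2) K) Q) = Q.eval a := by
      intro Q
      induction Q using Polynomial.induction_on with
      | C c => simp [algebraMap_eq]
      | add f g hf hg => simp [hf, hg]
      | monomial n c ih => simp [algebraMap_eq, hadef]
    have hUne : eval p U ≠ 0 := by
      rw [hU, map_mul, map_pow, eval_X, hevalaeval]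
      exact mul_ne_zero (pow_ne_zero _ ha) hP₁a_ne
    set G : Polynomial K := Polynomial.C 11 * Polynomial.X ^ 12 - Polynomial.C (3 * q) *
      Polynomial.X - Polynomial.C (26 * b) * Polynomial.X ^ 8 with hGdef
    have hrootG : G.IsRoot a := by
      rw [Polynomial.IsRoot, hGdef]
      simp only [Polynomial.eval_sub, Polynomial.eval_mul, Polynomial.eval_pow,
        Polynomial.eval_X, Polynomial.eval_C]
      linear_combination -e₂
    set G₁ := G / (Polynomial.X - Polynomial.C a) with hG₁
    have hfactG : (Polynomial.X - Polynomial.C a) * G₁ = G :=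
      Polynomial.mul_div_eq_iff_isRoot.mpr hrootG
    have hA1 : (X 0 - C a) * Polynomial.aeval (X 0 : MvPolynomial (Fin 2) K) G₁ =
        11 * X 0 ^ 12 - 3 * C q * X 0 - 26 * C b * X 0 ^ 8 := by
      have h14 : (X 0 - C a : MvPolynomial (Fin 2) K) =
          Polynomial.aeval (X 0 : MvPolynomial (Fin 2) K) (Polynomial.X - Polynomial.C a) := by
        simp [algebraMap_eq]
      rw [h14, ← map_mul, hfactG, hGdef]
      simp only [map_sub, map_mul, map_pow, Polynomial.aeval_X, Polynomial.aeval_C,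
        algebraMap_eq, map_ofNat]
    have hkeyU2 : (X 1 - C b) * (26 * X 0 ^ 8 * U) ∈ relF4 K q := by
      have hexp : (X 1 - C b) * (26 * X 0 ^ 8 * U) =
          U * (-11 * X 0 ^ 12 + 26 * X 0 ^ 8 * X 1 + 3 * C q * X 0) +
          Polynomial.aeval (X 0 : MvPolynomial (Fin 2) K) G₁ * ((X 0 - C a) * U) := by
        linear_combination (-U) * hA1
      rw [hexp]
      exact Ideal.add_mem _ (Ideal.mul_mem_left _ _ (Ideal.subset_span (Or.inr rfl)))
        (Ideal.mul_mem_left _ _ hkeyU)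
    have hU2ne : eval p (26 * X 0 ^ 8 * U) ≠ 0 := by
      rw [map_mul, map_mul, map_pow, eval_X, map_ofNat]
      exact mul_ne_zero (mul_ne_zero (by norm_num) (pow_ne_zero _ ha)) hUne
    set Loc := Localization.AtPrime 𝔪 with hLocDef
    have hgen0 : algebraMap R Loc (mkq (X 0 - C a)) = 0 := by
      refine (IsLocalization.map_eq_zero_iff 𝔪.primeCompl Loc _).mpr
        ⟨⟨mkq U, fun hmemU => hUne ((hmem𝔪 U).mp hmemU)⟩, ?_⟩
      show mkq U * mkq (X 0 - C a) = 0
      rw [← map_mul, mul_comm]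
      exact Ideal.Quotient.eq_zero_iff_mem.mpr hkeyU
    have hgen1 : algebraMap R Loc (mkq (X 1 - C b)) = 0 := by
      refine (IsLocalization.map_eq_zero_iff 𝔪.primeCompl Loc _).mpr
        ⟨⟨mkq (26 * X 0 ^ 8 * U), fun hmemU => hU2ne ((hmem𝔪 _).mp hmemU)⟩, ?_⟩
      show mkq (26 * X 0 ^ 8 * U) * mkq (X 1 - C b) = 0
      rw [← map_mul, mul_comm]
      exact Ideal.Quotient.eq_zero_iff_mem.mpr hkeyU2
    have hmkC : ∀ c : K, mkq (C c) = algebraMap K R c := by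
      intro c
      rw [IsScalarTower.algebraMap_apply K (MvPolynomial (Fin 2) K) R,
        Ideal.Quotient.algebraMap_eq, algebraMap_eq]
    have halg : ∀ r : MvPolynomial (Fin 2) K,
        algebraMap R Loc (mkq r) = algebraMap K Loc (eval p r) := by
      intro r
      obtain ⟨c₁, c₂, hc⟩ := Ideal.mem_span_pair.mp (sub_eval_mem_span p r)
      have h13 : r = C (eval p r) + c₁ * (X 0 - C a) + c₂ * (X 1 - C b) := by
        linear_combination -hc
      rw [h13, map_add, map_add, map_mul, map_mul, map_add, map_add, map_mul, map_mul,
        hgen0, hgen1, mul_zero, mul_zero, add_zero, add_zero, hmkC,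
        ← IsScalarTower.algebraMap_apply]
      congr 1
      simp [hadef, hbdef]
    have hsurj : Function.Surjective (algebraMap K Loc) := by
      intro z
      obtain ⟨⟨r, u⟩, rfl⟩ := IsLocalization.mk'_surjective 𝔪.primeCompl z
      obtain ⟨r', rfl⟩ := Ideal.Quotient.mk_surjective r
      obtain ⟨u', hu'⟩ := Ideal.Quotient.mk_surjective (u : R)
      have hu'ne : eval p u' ≠ 0 := by
        intro h0
        exact u.2 (show (u : R) ∈ 𝔪 by rw [← hu']; exact (hmem𝔪 u').mpr h0)
      refine ⟨eval p r' * (eval p u')⁻¹, ?_⟩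
      have hspec := IsLocalization.mk'_spec Loc (mkq r') u
      rw [show (u : R) = mkq u' from hu'.symm, halg r', halg u'] at hspec
      have hunit : IsUnit (algebraMap K Loc (eval p u')) :=
        (isUnit_iff_ne_zero.mpr hu'ne).map (algebraMap K Loc)
      refine hunit.mul_right_cancel ?_
      rw [hspec, ← map_mul]
      congr 1
      field_simp
    haveI : Nontrivial Loc := by infer_instance
    have hinj : Function.Injective (algebraMap K Loc) := RingHom.injective _
    have hbij : Function.Bijective (Algebra.ofId K Loc) := by
      have hco : ⇑(Algebra.ofId K Loc) = ⇑(algebraMap K Loc) := by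
        funext c
        exact Algebra.ofId_apply Loc c
      rw [hco]
      exact ⟨hinj, hsurj⟩
    exact ⟨(AlgEquiv.ofBijective (Algebra.ofId K Loc) hbij).symm⟩

end F4aux


set_option synthInstance.maxHeartbeats 1000000 in
theorem stmt_8 (K : Type) [Field K] [IsAlgClosed K] [CharZero K] (q : K) (hq : q ≠ 0) :
    (∃ hm : (mF4 K q).IsMaximal,
      haveI := hm.isPrime
      Nonempty ((Localization.AtPrime (mF4 K q)) ≃ₐ[K]
        (Polynomial K ⧸ Ideal.span {(Polynomial.X : Polynomial K) ^ 2}))) ∧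
    Ideal.span {(Polynomial.X : Polynomial K) ^ 2} =
      Ideal.span {Polynomial.derivative ((Polynomial.X : Polynomial K) ^ 3)} ∧
    ¬ IsReduced (MvPolynomial (Fin 2) K ⧸ relF4 K q) ∧
    ∀ (𝔪 : Ideal (MvPolynomial (Fin 2) K ⧸ relF4 K q)) (hm : 𝔪.IsMaximal),
      𝔪 ≠ mF4 K q →
      haveI := hm.isPrime
      Nonempty ((Localization.AtPrime 𝔪) ≃ₐ[K] K) := by
  refine ⟨⟨F4aux.mF4_isMaximal q, ?_⟩, F4aux.span_eq_deriv, F4aux.not_reduced q hq, ?_⟩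
  · haveI := (F4aux.mF4_isMaximal (K := K) q).isPrime
    exact F4aux.locEquiv q hq
  · intro 𝔪 hm hne
    haveI := hm.isPrime
    exact F4aux.other_max q hq 𝔪 hm hne
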